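/- Let λ ∈ ℂ, let n be a positive integer, and let r > 0 satisfy |λ|·r² < n². Then the function v(r) = r^{−n}·μ_n(r) is differentiable in r and satisfies v′(r) = −(n/r)·√(1 − λr²/n²)·v(r), where √ denotes the principal branch of the complex square root. -/

import Mathlib

noncomputable section

/-- `μ_n(r) = exp(n·[Log(√(1 − λr²/n²) + 1) − √(1 − λr²/n²) − Log 2 + 1])`,
where `Log` and `√` (i.e. `cpow (1/2)`) are the principal branches. -/
def mu (lam : ℂ) (n : ℕ) (r : ℝ) : ℂ :=
  Complex.exp ((n : ℂ) *
    (Complex.log ((1 - lam * (r : ℂ) ^ 2 / (n : ℂ) ^ 2) ^ ((1 : ℂ) / 2) + 1)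
      - (1 - lam * (r : ℂ) ^ 2 / (n : ℂ) ^ 2) ^ ((1 : ℂ) / 2)
      - Complex.log 2 + 1))

theorem stmt11 (lam : ℂ) (n : ℕ) (hn : 0 < n) (r : ℝ) (hr : 0 < r)
    (h : ‖lam‖ * r ^ 2 < (n : ℝ) ^ 2) :
    HasDerivAt (fun t : ℝ => (t : ℂ) ^ (-(n : ℤ)) * mu lam n t)
      (-((n : ℂ) / (r : ℂ)) * (1 - lam * (r : ℂ) ^ 2 / (n : ℂ) ^ 2) ^ ((1 : ℂ) / 2) *
        ((r : ℂ) ^ (-(n : ℤ)) * mu lam n r)) r := by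
  have hn0 : (n : ℂ) ≠ 0 := Nat.cast_ne_zero.mpr hn.ne'
  have hr0 : (r : ℂ) ≠ 0 := Complex.ofReal_ne_zero.mpr hr.ne'
  set w : ℂ := 1 - lam * (r : ℂ) ^ 2 / (n : ℂ) ^ 2 with hw_def
  -- |λ r²/n²| < 1
  have habs : ‖lam * (r : ℂ) ^ 2 / (n : ℂ) ^ 2‖ < 1 := by
    rw [norm_div, norm_mul]
    simp only [norm_pow, Complex.norm_real, Real.norm_eq_abs, Complex.norm_natCast]
    rw [div_lt_one (by positivity)]
    rwa [abs_of_pos hr]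
  have hwre : 0 < w.re := by
    have h1 : (lam * (r : ℂ) ^ 2 / (n : ℂ) ^ 2).re < 1 :=
      lt_of_le_of_lt (Complex.re_le_norm _) habs
    simp only [hw_def, Complex.sub_re, Complex.one_re]
    linarith
  have hw0 : w ≠ 0 := fun h0 => by simp [h0] at hwre
  set S : ℂ := w ^ ((1 : ℂ) / 2) with hS_def
  -- Re S > 0
  have hSre : 0 < S.re := by
    rw [hS_def, Complex.cpow_def_of_ne_zero hw0, Complex.exp_re]
    have harg : |Complex.arg w| < Real.pi / 2 :=
      Complex.abs_arg_lt_pi_div_two_iff.mpr (Or.inl hwre)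
    have him : (Complex.log w * ((1 : ℂ) / 2)).im = Complex.arg w / 2 := by
      simp [Complex.log_im, Complex.mul_im, Complex.log_re]
      ring
    rw [him]
    have : Real.cos (Complex.arg w / 2) > 0 := by
      apply Real.cos_pos_of_mem_Ioo
      constructor
      · rw [abs_lt] at harg; linarith [harg.1]
      · rw [abs_lt] at harg; linarith [harg.2]
    positivity
  have hS0 : S ≠ 0 := fun h0 => by simp [h0] at hSre
  have hS1 : S + 1 ≠ 0 := fun h0 => by
    have : (S + 1).re = 0 := by rw [h0]; simp
    simp only [Complex.add_re, Complex.one_re] at this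
    linarith
  have hS1slit : S + 1 ∈ Complex.slitPlane := by
    apply Or.inl
    simp only [Complex.add_re, Complex.one_re]
    linarith
  -- key algebraic identities
  have hSS : S * S = w := by
    have := Complex.cpow_nat_inv_pow w (two_ne_zero)
    rw [hS_def]
    have h12 : ((1 : ℂ) / 2) = ((2 : ℕ) : ℂ)⁻¹ := by norm_num
    rw [h12]
    calc w ^ ((2 : ℕ) : ℂ)⁻¹ * w ^ ((2 : ℕ) : ℂ)⁻¹ = (w ^ ((2 : ℕ) : ℂ)⁻¹) ^ (2 : ℕ) := by ring
    _ = w := this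
  set T : ℂ := w ^ ((1 : ℂ) / 2 - 1) with hT_def
  have hTS : T * S = 1 := by
    rw [hT_def, hS_def, ← Complex.cpow_add _ _ hw0]
    norm_num
  -- derivatives in ℂ
  have h1 : HasDerivAt (fun z : ℂ => z ^ 2) (2 * (r : ℂ)) (r : ℂ) := by
    simpa using hasDerivAt_pow 2 (r : ℂ)
  have hw : HasDerivAt (fun z : ℂ => 1 - lam * z ^ 2 / (n : ℂ) ^ 2)
      (-(lam * (2 * (r : ℂ)) / (n : ℂ) ^ 2)) (r : ℂ) :=
    ((h1.const_mul lam).div_const ((n : ℂ) ^ 2)).const_sub 1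
  have hs : HasDerivAt (fun z : ℂ => (1 - lam * z ^ 2 / (n : ℂ) ^ 2) ^ ((1 : ℂ) / 2))
      ((1 : ℂ) / 2 * w ^ ((1 : ℂ) / 2 - 1) * -(lam * (2 * (r : ℂ)) / (n : ℂ) ^ 2)) (r : ℂ) :=
    hw.cpow_const (Or.inl hwre)
  set s' : ℂ := (1 : ℂ) / 2 * w ^ ((1 : ℂ) / 2 - 1) * -(lam * (2 * (r : ℂ)) / (n : ℂ) ^ 2)
    with hs'_def
  have hlog : HasDerivAt
      (fun z : ℂ => Complex.log ((1 - lam * z ^ 2 / (n : ℂ) ^ 2) ^ ((1 : ℂ) / 2) + 1))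
      (s' / (S + 1)) (r : ℂ) := (hs.add_const 1).clog hS1slit
  have hg : HasDerivAt (fun z : ℂ => (n : ℂ) *
      (Complex.log ((1 - lam * z ^ 2 / (n : ℂ) ^ 2) ^ ((1 : ℂ) / 2) + 1)
        - (1 - lam * z ^ 2 / (n : ℂ) ^ 2) ^ ((1 : ℂ) / 2) - Complex.log 2 + 1))
      ((n : ℂ) * (s' / (S + 1) - s')) (r : ℂ) :=
    (((hlog.sub hs).sub_const (Complex.log 2)).add_const 1).const_mul (n : ℂ)
  have hexp := hg.cexp
  have hz : HasDerivAt (fun z : ℂ => z ^ (-(n : ℤ)))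
      (-(n : ℂ) * (r : ℂ) ^ (-(n : ℤ) - 1)) (r : ℂ) := by
    simpa using hasDerivAt_zpow (-(n : ℤ)) (r : ℂ) (Or.inl hr0)
  have H := (hz.mul hexp).comp_ofReal
  convert H using 1
  · rfl
  simp only [mu, hw_def]
  set E : ℂ := Complex.exp ((n : ℂ) * (Complex.log (S + 1) - S - Complex.log 2 + 1)) with hE
  have hrz : (r : ℂ) ^ (-(n : ℤ) - 1) = (r : ℂ) ^ (-(n : ℤ)) * (r : ℂ)⁻¹ :=
    zpow_sub_one₀ hr0 _
  rw [hrz]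
  set P : ℂ := (r : ℂ) ^ (-(n : ℤ)) with hP
  rw [hs'_def]
  have key : lam * (r : ℂ) ^ 2 = (n : ℂ) ^ 2 * (1 - S * S) := by
    rw [hSS, hw_def]; field_simp; ring
  rw [show w ^ ((1:ℂ)/2 - 1) = T from rfl]
  field_simp [hS1, hn0, hr0]
  linear_combination (-P * E * T * S) * key +
    (-P * E * (n : ℂ) ^ 2 * (1 - S * S)) * hTS
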